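/- Let g be an even invertible supermatrix of size (r|s)×(r|s) over a supercommutative superalgebra, with block decomposition g = [[g₀₀, g₀₁],[g₁₀, g₁₁]] where g₀₀ (r×r) and g₁₁ (s×s) have even entries and g₀₁, g₁₀ have odd entries, and g₀₀, g₁₁ are invertible. Define Ber g := det(g₀₀ - g₀₁ g₁₁⁻¹ g₁₀) · det(g₁₁)⁻¹ and Ber* g := det(g₁₁ - g₁₀ g₀₀⁻¹ g₀₁) · det(g₀₀)⁻¹. Then Ber* g = (Ber g)⁻¹. -/

import Mathlib

/-- Determinant of a square matrix with (possibly noncommutative) ring entries,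
given by the Leibniz formula with ordered (column-index) products. For matrices
whose entries are even (central) elements of a superalgebra this is the usual
determinant. -/
def ncdet {A : Type} [Ring A] {k : ℕ} (M : Matrix (Fin k) (Fin k) A) : A :=
  ∑ σ : Equiv.Perm (Fin k),
    ((Equiv.Perm.sign σ : ℤˣ) : ℤ) • (List.ofFn fun i => M (σ i) i).prod

/- STATEMENT 6: for an even invertible supermatrix g = [[g00,g01],[g10,g11]]
over a supercommutative superalgebra (diagonal blocks even & invertible,
off-diagonal odd), Ber* g = (Ber g)⁻¹, i.e.
(det(g00 − g01 g11⁻¹ g10)·det(g11)⁻¹) · (det(g11 − g10 g00⁻¹ g01)·det(g00)⁻¹) = 1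
(both orders). -/


theorem ncdet_map {A B : Type} [Ring A] [Ring B] (f : A →+* B) {k : ℕ}
    (M : Matrix (Fin k) (Fin k) A) : ncdet (M.map f) = f (ncdet M) := by
  unfold ncdet
  rw [map_sum]
  refine Finset.sum_congr rfl fun σ _ => ?_
  rw [map_zsmul]
  congr 1
  rw [map_list_prod f, List.map_ofFn]
  rfl

theorem ncdet_eq_det {R : Type} [CommRing R] {k : ℕ} (M : Matrix (Fin k) (Fin k) R) :
    ncdet M = M.det := by
  rw [ncdet, Matrix.det_apply]
  refine Finset.sum_congr rfl fun σ _ => ?_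
  rw [List.prod_ofFn, Units.smul_def]

theorem ncdet_one {A : Type} [Ring A] {k : ℕ} : ncdet (1 : Matrix (Fin k) (Fin k) A) = 1 := by
  have h : (1 : Matrix (Fin k) (Fin k) A) = (1 : Matrix (Fin k) (Fin k) ℤ).map (Int.castRingHom A) := by
    rw [Matrix.map_one _ (map_zero _) (map_one _)]
  rw [h, ncdet_map, ncdet_eq_det, Matrix.det_one, map_one]

theorem ncdet_fin_zero {A : Type} [Ring A] (M : Matrix (Fin 0) (Fin 0) A) : ncdet M = 1 := by
  have : M = 1 := by
    funext i j; exact absurd i.isLt (Nat.not_lt_zero _)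
  rw [this, ncdet_one]

structure CSub (A : Type) [Ring A] where
  S : Subring A
  comm : ∀ x ∈ S, ∀ y ∈ S, x * y = y * x

variable {A : Type} [Ring A]

instance (C : CSub A) : CommRing C.S :=
  { (inferInstance : Ring ↥C.S) with
    mul_comm := fun a b => Subtype.ext (C.comm a a.2 b b.2) }

def CSub.emb (C : CSub A) {m n : Type} (M : Matrix m n C.S) : Matrix m n A :=
  M.map (C.S.subtype)

def CSub.lift (C : CSub A) {m n : Type} (M : Matrix m n A) (h : ∀ i j, M i j ∈ C.S) :
    Matrix m n C.S := Matrix.of fun i j => ⟨M i j, h i j⟩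

theorem CSub.emb_lift (C : CSub A) {m n : Type} (M : Matrix m n A) (h : ∀ i j, M i j ∈ C.S) :
    C.emb (C.lift M h) = M := rfl

theorem CSub.emb_mul (C : CSub A) {m n o : Type} [Fintype n] (M : Matrix m n C.S)
    (N : Matrix n o C.S) : C.emb (M * N) = C.emb M * C.emb N :=
  Matrix.map_mul

theorem CSub.emb_one (C : CSub A) {n : Type} [DecidableEq n] :
    C.emb (1 : Matrix n n C.S) = 1 :=
  Matrix.map_one _ (map_zero _) (map_one _)

theorem ncdet_emb (C : CSub A) {k : ℕ} (M : Matrix (Fin k) (Fin k) C.S) :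
    ncdet (C.emb M) = (M.det : A) := by
  rw [CSub.emb, ncdet_map, ncdet_eq_det]; rfl

theorem ncdet_lift (C : CSub A) {k : ℕ} (M : Matrix (Fin k) (Fin k) A)
    (h : ∀ i j, M i j ∈ C.S) : ncdet M = ((C.lift M h).det : A) := by
  rw [← ncdet_emb C, CSub.emb_lift]

theorem ncdet_mem (C : CSub A) {k : ℕ} (M : Matrix (Fin k) (Fin k) A)
    (h : ∀ i j, M i j ∈ C.S) : ncdet M ∈ C.S := by
  rw [ncdet_lift C M h]; exact ((C.lift M h).det).2

theorem ncdet_mul_of_mem (C : CSub A) {k : ℕ} {M N : Matrix (Fin k) (Fin k) A}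
    (hM : ∀ i j, M i j ∈ C.S) (hN : ∀ i j, N i j ∈ C.S) :
    ncdet (M * N) = ncdet M * ncdet N := by
  have h2 : M * N = C.emb (C.lift M hM * C.lift N hN) := by
    rw [CSub.emb_mul, CSub.emb_lift, CSub.emb_lift]
  rw [h2, ncdet_emb, Matrix.det_mul, ncdet_lift C M hM, ncdet_lift C N hN]
  push_cast
  rfl


theorem esymm_cast {n : ℕ} (i : Fin n) :
    finSumFinEquiv.symm (Fin.castSucc i) = Sum.inl i := finSumFinEquiv_symm_apply_castAdd i

theorem esymm_last {n : ℕ} :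
    finSumFinEquiv.symm (Fin.last n) = Sum.inr (0 : Fin 1) := by
  have h : Fin.last n = Fin.natAdd n (0 : Fin 1) := by ext; simp
  rw [h, finSumFinEquiv_symm_apply_natAdd]

theorem det_split_last {R : Type} [CommRing R] {n : ℕ}
    (M : Matrix (Fin (n+1)) (Fin (n+1)) R) (W : Matrix (Fin n) (Fin n) R)
    (hW : M.submatrix Fin.castSucc Fin.castSucc * W = 1)
    (hW' : W * M.submatrix Fin.castSucc Fin.castSucc = 1) :
    M.det = (M.submatrix Fin.castSucc Fin.castSucc).det *
      (M (Fin.last n) (Fin.last n) -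
        ∑ k, ∑ j, M (Fin.last n) (Fin.castSucc k) * W k j * M (Fin.castSucc j) (Fin.last n)) := by
  set Ab := M.submatrix Fin.castSucc Fin.castSucc with hAb
  haveI : Invertible Ab := ⟨W, hW', hW⟩
  have hWinv : ⅟Ab = W := invOf_eq_right_inv hW
  set Bb : Matrix (Fin n) (Fin 1) R := Matrix.of fun i _ => M i.castSucc (Fin.last n) with hBb
  set Cb : Matrix (Fin 1) (Fin n) R := Matrix.of fun _ j => M (Fin.last n) j.castSucc with hCb
  set Db : Matrix (Fin 1) (Fin 1) R := Matrix.of fun _ _ => M (Fin.last n) (Fin.last n) with hDb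
  have hM : M = (Matrix.fromBlocks Ab Bb Cb Db).submatrix
      (finSumFinEquiv.symm) (finSumFinEquiv.symm) := by
    funext i j
    refine Fin.lastCases ?_ (fun i' => ?_) i <;> [skip; skip]
    · refine Fin.lastCases ?_ (fun j' => ?_) j
      · simp [Matrix.submatrix_apply, esymm_last, hDb]
      · simp [Matrix.submatrix_apply, esymm_last, esymm_cast, hCb]
    · refine Fin.lastCases ?_ (fun j' => ?_) j
      · simp [Matrix.submatrix_apply, esymm_last, esymm_cast, hBb]
      · simp [Matrix.submatrix_apply, esymm_cast, hAb]
  calc M.det = (Matrix.fromBlocks Ab Bb Cb Db).det := by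
        rw [hM, Matrix.det_submatrix_equiv_self]
    _ = Ab.det * (Db - Cb * ⅟Ab * Bb).det := Matrix.det_fromBlocks₁₁ _ _ _ _
    _ = _ := by
        rw [Matrix.det_fin_one]
        congr 1
        rw [Matrix.sub_apply, hWinv]
        congr 1
        rw [Matrix.mul_apply]
        rw [Finset.sum_comm]
        refine Finset.sum_congr rfl fun j _ => ?_
        rw [Matrix.mul_apply, Finset.sum_mul]
        rfl


section Core

variable {A : Type} [Ring A] (C : CSub A) (od : A → Prop)
variable (hanti : ∀ a b, od a → od b → a * b = -(b * a))
variable (hsq : ∀ a, od a → a * a = 0)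
variable (hprod : ∀ a b, od a → od b → a * b ∈ C.S)
variable (hso : ∀ s a, s ∈ C.S → od a → s * a = a * s)

include hanti hsq hprod hso in
theorem rank_one : ∀ {r : ℕ} (u y : Fin r → A), (∀ i, od (u i)) → (∀ i, od (y i)) →
    ncdet ((1 : Matrix (Fin r) (Fin r) A) + Matrix.of fun i j => u i * y j)
      * (1 + ∑ i, y i * u i) = 1 := by
  intro r
  induction r with
  | zero =>
    intro u y _ _
    have h0 : ((1 : Matrix (Fin 0) (Fin 0) A) + Matrix.of fun i j => u i * y j) = 1 := by
      funext i j; exact absurd i.isLt (Nat.not_lt_zero _)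
    rw [h0, ncdet_one]
    simp
  | succ n ih =>
    intro u y hu hy
    set u' : Fin n → A := fun i => u i.castSucc with hu'def
    set y' : Fin n → A := fun i => y i.castSucc with hy'def
    set ul : A := u (Fin.last n) with huldef
    set yl : A := y (Fin.last n) with hyldef
    set N : Matrix (Fin (n+1)) (Fin (n+1)) A :=
      (1 : Matrix (Fin (n+1)) (Fin (n+1)) A) + Matrix.of fun i j => u i * y j with hNdef
    have hNm : ∀ i j, N i j ∈ C.S := by
      intro i j
      show (1 : Matrix (Fin (n+1)) (Fin (n+1)) A) i j + u i * y j ∈ C.S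
      refine add_mem ?_ (hprod _ _ (hu i) (hy j))
      rw [Matrix.one_apply]
      split <;> [exact one_mem _; exact zero_mem _]
    set N' : Matrix (Fin n) (Fin n) A :=
      (1 : Matrix (Fin n) (Fin n) A) + Matrix.of fun i j => u' i * y' j with hN'def
    have hN'm : ∀ i j, N' i j ∈ C.S := by
      intro i j
      show (1 : Matrix (Fin n) (Fin n) A) i j + u' i * y' j ∈ C.S
      refine add_mem ?_ (hprod _ _ (hu _) (hy _))
      rw [Matrix.one_apply]
      split <;> [exact one_mem _; exact zero_mem _]
    set Nl := C.lift N hNm with hNl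
    set N'l := C.lift N' hN'm with hN'l
    have hsub : Nl.submatrix Fin.castSucc Fin.castSucc = N'l := by
      funext i j
      refine Subtype.ext ?_
      show N i.castSucc j.castSucc = N' i j
      show (1 : Matrix (Fin (n+1)) (Fin (n+1)) A) i.castSucc j.castSucc + u i.castSucc * y j.castSucc
        = (1 : Matrix (Fin n) (Fin n) A) i j + u' i * y' j
      rw [Matrix.one_apply, Matrix.one_apply]
      simp [Fin.castSucc_inj]
      rfl
    -- the even scalar t'
    set t'l : C.S := ∑ i, (⟨y' i * u' i, hprod _ _ (hy _) (hu _)⟩ : C.S) with ht'l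
    have coet' : (t'l : A) = ∑ i, y' i * u' i := by rw [ht'l]; push_cast; rfl
    -- IH in the subring
    have ihA : ncdet N' * (1 + ∑ i, y' i * u' i) = 1 :=
      ih u' y' (fun i => hu _) (fun i => hy _)
    have hdet1 : N'l.det * (1 + t'l) = 1 := by
      refine Subtype.coe_injective ?_
      push_cast
      rw [coet']
      rw [← ncdet_lift C N' hN'm]
      exact ihA
    -- invertibility
    haveI : Invertible N'l := Matrix.invertibleOfIsUnitDet _ (IsUnit.of_mul_eq_one _ hdet1)
    set W := ⅟N'l with hWdef
    have hW : N'l * W = 1 := mul_invOf_self _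
    have hW' : W * N'l = 1 := invOf_mul_self _
    set WA := C.emb W with hWAdef
    have hWA' : WA * N' = 1 := by
      calc WA * N' = C.emb W * C.emb N'l := by rw [C.emb_lift]
        _ = C.emb (W * N'l) := (C.emb_mul _ _).symm
        _ = 1 := by rw [hW', C.emb_one]
    -- push-through at the vector level
    have hpush : ∀ i, (∑ j, N' i j * u' j) = u' i * (1 + (t'l : A)) := by
      intro i
      rw [coet']
      have h5 : ∀ j, N' i j * u' j
          = (1 : Matrix (Fin n) (Fin n) A) i j * u' j + u' i * (y' j * u' j) := by
        intro j
        show ((1 : Matrix (Fin n) (Fin n) A) i j + u' i * y' j) * u' j = _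
        rw [add_mul, mul_assoc]
      rw [Finset.sum_congr rfl fun j _ => h5 j, Finset.sum_add_distrib]
      rw [← Finset.mul_sum]
      simp [Matrix.one_apply, mul_add]
    have hueq : ∀ k, u' k = (∑ i, (WA k i) * u' i) * (1 + (t'l : A)) := by
      intro k
      have h1 : u' k = ∑ j, (WA * N') k j * u' j := by
        rw [hWA']
        simp [Matrix.one_apply]
      rw [h1]
      have h2 : ∀ j, (WA * N') k j * u' j = ∑ i, WA k i * (N' i j * u' j) := by
        intro j
        rw [Matrix.mul_apply, Finset.sum_mul]
        exact Finset.sum_congr rfl fun i _ => (mul_assoc _ _ _)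
      rw [Finset.sum_congr rfl fun j _ => h2 j, Finset.sum_comm]
      rw [Finset.sum_congr rfl fun i _ => (Finset.mul_sum _ _ _).symm]
      rw [Finset.sum_congr rfl fun i _ => congrArg (WA k i * ·) (hpush i)]
      rw [Finset.sum_congr rfl fun i _ => (mul_assoc (WA k i) (u' i) _).symm]
      rw [Finset.sum_mul]
    -- the scalar w
    set w : C.S := ∑ k, ∑ i, W k i * (⟨y' k * u' i, hprod _ _ (hy _) (hu _)⟩ : C.S) with hwdef
    have coew : (w : A) = ∑ k, ∑ i, y' k * ((WA k i) * u' i) := by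
      rw [hwdef]
      push_cast
      refine Finset.sum_congr rfl fun k _ => Finset.sum_congr rfl fun i _ => ?_
      have hcomm : (W k i : A) * y' k = y' k * (W k i : A) := hso _ (y' k) (W k i).2 (hy _)
      show (W k i : A) * (y' k * u' i) = y' k * ((W k i : A) * u' i)
      rw [← mul_assoc, hcomm, mul_assoc]
    have claim1 : w * (1 + t'l) = t'l := by
      refine Subtype.coe_injective ?_
      push_cast
      rw [coew, Finset.sum_mul]
      have h6 : ∀ k, (∑ i, y' k * ((WA k i) * u' i)) * (1 + (t'l : A)) = y' k * u' k := by
        intro k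
        rw [← Finset.mul_sum, mul_assoc, ← hueq k]
      rw [Finset.sum_congr rfl fun k _ => h6 k]
      exact coet'.symm
    -- the nilpotent scalar a
    set aR : C.S := (⟨ul * yl, hprod _ _ (hu _) (hy _)⟩ : C.S) with haR
    have coea : (aR : A) = ul * yl := rfl
    have claim2 : aR * aR = 0 := by
      refine Subtype.coe_injective ?_
      push_cast
      show ul * yl * (ul * yl) = 0
      have h1 : yl * ul = -(ul * yl) := hanti yl ul (hy _) (hu _)
      calc ul * yl * (ul * yl) = ul * (yl * ul) * yl := by noncomm_ring
        _ = ul * (-(ul * yl)) * yl := by rw [h1]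
        _ = -(ul * ul * (yl * yl)) := by noncomm_ring
        _ = 0 := by rw [hsq ul (hu _)]; simp
    -- Schur
    have hdetN : Nl.det = N'l.det *
        (Nl (Fin.last n) (Fin.last n) -
          ∑ k, ∑ j, Nl (Fin.last n) (Fin.castSucc k) * W k j * Nl (Fin.castSucc j) (Fin.last n)) := by
      have h7 := det_split_last Nl W (by rw [hsub]; exact hW) (by rw [hsub]; exact hW')
      rw [hsub] at h7
      exact h7
    -- identify the Schur scalar
    have hrow : ∀ k : Fin n, (Nl (Fin.last n) (Fin.castSucc k) : A) = ul * y' k := by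
      intro k
      show (1 : Matrix (Fin (n+1)) (Fin (n+1)) A) (Fin.last n) (Fin.castSucc k)
        + u (Fin.last n) * y (Fin.castSucc k) = ul * y' k
      rw [Matrix.one_apply_ne (Fin.ne_of_gt (Fin.castSucc_lt_last k)), zero_add]
    have hcol : ∀ j : Fin n, (Nl (Fin.castSucc j) (Fin.last n) : A) = u' j * yl := by
      intro j
      show (1 : Matrix (Fin (n+1)) (Fin (n+1)) A) (Fin.castSucc j) (Fin.last n)
        + u (Fin.castSucc j) * y (Fin.last n) = u' j * yl
      rw [Matrix.one_apply_ne (Fin.ne_of_lt (Fin.castSucc_lt_last j)), zero_add]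
    have claim3 : (Nl (Fin.last n) (Fin.last n) -
          ∑ k, ∑ j, Nl (Fin.last n) (Fin.castSucc k) * W k j * Nl (Fin.castSucc j) (Fin.last n))
        = 1 + aR - w * aR := by
      refine Subtype.coe_injective ?_
      push_cast
      rw [coew]
      have hlast : (Nl (Fin.last n) (Fin.last n) : A) = 1 + ul * yl := by
        show (1 : Matrix (Fin (n+1)) (Fin (n+1)) A) (Fin.last n) (Fin.last n)
          + u (Fin.last n) * y (Fin.last n) = 1 + ul * yl
        rw [Matrix.one_apply_eq]
      rw [hlast]
      congr 1
      rw [Finset.sum_mul]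
      refine Finset.sum_congr rfl fun k _ => ?_
      rw [Finset.sum_mul]
      refine Finset.sum_congr rfl fun j _ => ?_
      rw [hrow k, hcol j]
      have h1 : ul * y' k = -(y' k * ul) := hanti ul (y' k) (hu _) (hy _)
      have h2 : ul * u' j = -(u' j * ul) := hanti ul (u' j) (hu _) (hu _)
      have h3 : (W k j : A) * ul = ul * (W k j : A) := hso _ ul (W k j).2 (hu _)
      calc (ul * y' k) * (W k j : A) * (u' j * yl)
          = (-(y' k * ul)) * (W k j : A) * (u' j * yl) := by rw [h1]
        _ = -(y' k * (ul * (W k j : A)) * u' j * yl) := by noncomm_ring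
        _ = -(y' k * ((W k j : A) * ul) * u' j * yl) := by rw [h3]
        _ = -(y' k * (W k j : A) * (ul * u' j) * yl) := by noncomm_ring
        _ = -(y' k * (W k j : A) * (-(u' j * ul)) * yl) := by rw [h2]
        _ = y' k * ((W k j : A) * u' j) * (ul * yl) := by noncomm_ring
    -- final assembly
    have goalR : (N'l.det * (1 + aR - w * aR)) * (1 + t'l - aR) = 1 := by
      linear_combination hdet1 + (-(N'l.det * aR)) * claim1 + (N'l.det * (w - 1)) * claim2
    have hsum : 1 + ∑ i, y i * u i = ((1 + t'l - aR : C.S) : A) := by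
      have hc : ((1 + t'l - aR : C.S) : A) = 1 + (t'l : A) - (aR : A) := by push_cast; rfl
      rw [hc, coet', coea, Fin.sum_univ_castSucc]
      have hbridge : ∑ i : Fin n, y i.castSucc * u i.castSucc = ∑ i, y' i * u' i := rfl
      rw [hbridge]
      have hylul : yl * ul = -(ul * yl) := hanti yl ul (hy _) (hu _)
      show 1 + ((∑ i, y' i * u' i) + yl * ul) = _
      rw [hylul]
      abel
    rw [hsum, ncdet_lift C N hNm]
    calc ((Nl.det : C.S) : A) * ((1 + t'l - aR : C.S) : A)
        = ((Nl.det * (1 + t'l - aR) : C.S) : A) := by push_cast; rfl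
      _ = 1 := by
          rw [hdetN, claim3, goalR]
          rfl

end Core

section Core2

variable {A : Type} [Ring A] (C : CSub A) (od : A → Prop)
variable (hanti : ∀ a b, od a → od b → a * b = -(b * a))
variable (hsq : ∀ a, od a → a * a = 0)
variable (hprod : ∀ a b, od a → od b → a * b ∈ C.S)
variable (hso : ∀ s a, s ∈ C.S → od a → s * a = a * s)
variable (hsmul : ∀ s a, s ∈ C.S → od a → od (s * a))
variable (hadd : ∀ a b, od a → od b → od (a + b))
variable (hzero : od 0)

include hadd hzero in
theorem od_sum {ι : Type} (t : Finset ι) (f : ι → A) (h : ∀ i ∈ t, od (f i)) :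
    od (∑ i ∈ t, f i) :=
  Finset.sum_induction f od hadd hzero h

theorem triple_apply {R : Type} [Ring R] {n : ℕ} (X : Matrix (Fin 1) (Fin n) R)
    (W : Matrix (Fin n) (Fin n) R) (Z : Matrix (Fin n) (Fin 1) R) :
    (X * W * Z) 0 0 = ∑ k, ∑ j, X 0 k * W k j * Z j 0 := by
  rw [Matrix.mul_apply, Finset.sum_comm]
  refine Finset.sum_congr rfl fun j _ => ?_
  rw [Matrix.mul_apply, Finset.sum_mul]

include hanti hsq hprod hso hsmul hadd hzero in
theorem odd_sylvester (r : ℕ) : ∀ {s : ℕ} (P : Matrix (Fin r) (Fin s) A)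
    (Y : Matrix (Fin s) (Fin r) A),
    (∀ i j, od (P i j)) → (∀ i j, od (Y i j)) →
    ncdet ((1 : Matrix (Fin r) (Fin r) A) + P * Y)
      * ncdet ((1 : Matrix (Fin s) (Fin s) A) + Y * P) = 1 := by
  intro s
  induction s with
  | zero =>
    intro P Y _ _
    have h1 : P * Y = 0 := by
      funext i j; simp [Matrix.mul_apply]
    rw [h1, add_zero, ncdet_one, ncdet_fin_zero]
    simp
  | succ n ih =>
    intro P Y hP hY
    set P₁ : Matrix (Fin r) (Fin n) A := Matrix.of fun i j => P i j.castSucc with hP₁def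
    set Y₁ : Matrix (Fin n) (Fin r) A := Matrix.of fun i j => Y i.castSucc j with hY₁def
    set pc : Matrix (Fin r) (Fin 1) A := Matrix.of fun i _ => P i (Fin.last n) with hpcdef
    set yr : Matrix (Fin 1) (Fin r) A := Matrix.of fun _ j => Y (Fin.last n) j with hyrdef
    set M1 : Matrix (Fin r) (Fin r) A := 1 + P₁ * Y₁ with hM1def
    set M2 : Matrix (Fin n) (Fin n) A := 1 + Y₁ * P₁ with hM2def
    set M3 : Matrix (Fin (n+1)) (Fin (n+1)) A := 1 + Y * P with hM3def
    have honem : ∀ {m : ℕ} (i j : Fin m), (1 : Matrix (Fin m) (Fin m) A) i j ∈ C.S := by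
      intro m i j
      rw [Matrix.one_apply]
      split <;> [exact one_mem _; exact zero_mem _]
    have hM1m : ∀ i j, M1 i j ∈ C.S := by
      intro i j
      refine add_mem (honem i j) ?_
      rw [Matrix.mul_apply]
      exact sum_mem fun k _ => hprod _ _ (hP _ _) (hY _ _)
    have hM2m : ∀ i j, M2 i j ∈ C.S := by
      intro i j
      refine add_mem (honem i j) ?_
      rw [Matrix.mul_apply]
      exact sum_mem fun k _ => hprod _ _ (hY _ _) (hP _ _)
    have hM3m : ∀ i j, M3 i j ∈ C.S := by
      intro i j
      refine add_mem (honem i j) ?_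
      rw [Matrix.mul_apply]
      exact sum_mem fun k _ => hprod _ _ (hY _ _) (hP _ _)
    set M1l := C.lift M1 hM1m with hM1l
    set M2l := C.lift M2 hM2m with hM2l
    set M3l := C.lift M3 hM3m with hM3l
    -- induction hypothesis, lifted
    have ihA : ncdet M1 * ncdet M2 = 1 := ih P₁ Y₁ (fun i j => hP _ _) (fun i j => hY _ _)
    have hD : M1l.det * M2l.det = 1 := by
      refine Subtype.coe_injective ?_
      push_cast
      rw [← ncdet_lift C M1 hM1m, ← ncdet_lift C M2 hM2m]
      exact ihA
    haveI : Invertible M1l := Matrix.invertibleOfIsUnitDet _ (IsUnit.of_mul_eq_one _ hD)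
    haveI : Invertible M2l := Matrix.invertibleOfIsUnitDet _
      (IsUnit.of_mul_eq_one _ (by rw [mul_comm] at hD; exact hD))
    set W := ⅟M1l with hWdef
    set W' := ⅟M2l with hW'def
    set WAm := C.emb W with hWAdef
    set W'A := C.emb W' with hW'Adef
    have hM1WA : M1 * WAm = 1 := by
      calc M1 * WAm = C.emb M1l * C.emb W := by rw [C.emb_lift]
        _ = C.emb (M1l * W) := (C.emb_mul _ _).symm
        _ = 1 := by rw [mul_invOf_self, C.emb_one]
    have hWAM1 : WAm * M1 = 1 := by
      calc WAm * M1 = C.emb W * C.emb M1l := by rw [C.emb_lift]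
        _ = C.emb (W * M1l) := (C.emb_mul _ _).symm
        _ = 1 := by rw [invOf_mul_self, C.emb_one]
    have hM2W'A : M2 * W'A = 1 := by
      calc M2 * W'A = C.emb M2l * C.emb W' := by rw [C.emb_lift]
        _ = C.emb (M2l * W') := (C.emb_mul _ _).symm
        _ = 1 := by rw [mul_invOf_self, C.emb_one]
    -- splitting of P*Y
    have fact0 : P * Y = P₁ * Y₁ + pc * yr := by
      funext i j
      rw [Matrix.add_apply, Matrix.mul_apply, Matrix.mul_apply, Matrix.mul_apply]
      rw [Fin.sum_univ_castSucc]
      congr 1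
      rw [Fin.sum_univ_one]
      rfl
    -- the odd column vector u
    set uum : Matrix (Fin r) (Fin 1) A := WAm * pc with huumdef
    have huum_od : ∀ i, od (uum i 0) := by
      intro i
      rw [huumdef, Matrix.mul_apply]
      exact od_sum od hadd hzero _ _ fun k _ => hsmul _ _ (W i k).2 (hP _ _)
    have hyr_od : ∀ j, od (yr 0 j) := fun j => hY _ _
    -- factorization of 1 + P * Y
    have fact1 : (1 : Matrix (Fin r) (Fin r) A) + P * Y = M1 * (1 + uum * yr) := by
      rw [Matrix.mul_add, Matrix.mul_one, huumdef, ← Matrix.mul_assoc, ← Matrix.mul_assoc,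
        hM1WA, Matrix.one_mul, fact0, hM1def]
      abel
    -- rank-one determinant
    have huyr : (Matrix.of fun i j => uum i 0 * yr 0 j) = uum * yr := by
      funext i j
      rw [Matrix.mul_apply, Fin.sum_univ_one]
      rfl
    have hro := rank_one C od hanti hsq hprod hso (fun i => uum i 0) (fun j => yr 0 j)
      huum_od hyr_od
    rw [huyr] at hro
    have hsum_uy : ∑ i, yr 0 i * uum i 0 = (yr * uum) 0 0 := by
      rw [Matrix.mul_apply]
    rw [hsum_uy] at hro
    -- membership for 1 + uum * yr
    have hUm : ∀ i j, ((1 : Matrix (Fin r) (Fin r) A) + uum * yr) i j ∈ C.S := by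
      intro i j
      refine add_mem (honem i j) ?_
      rw [Matrix.mul_apply]
      exact sum_mem fun k _ => hprod _ _ (huum_od i) (hyr_od j)
    -- push-through identity
    have hK : M1 * (1 - P₁ * (W'A * Y₁)) = 1 := by
      have e2 : M1 * (P₁ * (W'A * Y₁)) = P₁ * Y₁ := by
        calc M1 * (P₁ * (W'A * Y₁))
            = P₁ * (W'A * Y₁) + P₁ * Y₁ * (P₁ * (W'A * Y₁)) := by
              rw [hM1def, Matrix.add_mul, Matrix.one_mul]
          _ = P₁ * ((1 + Y₁ * P₁) * (W'A * Y₁)) := by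
              rw [Matrix.add_mul, Matrix.one_mul, Matrix.mul_add, Matrix.mul_assoc P₁ Y₁,
                ← Matrix.mul_assoc Y₁ P₁]
          _ = P₁ * ((M2 * W'A) * Y₁) := by rw [← hM2def, Matrix.mul_assoc]
          _ = P₁ * Y₁ := by rw [hM2W'A, Matrix.one_mul]
      rw [Matrix.mul_sub, Matrix.mul_one, e2, hM1def]
      abel
    have hPT : WAm = 1 - P₁ * (W'A * Y₁) := by
      calc WAm = WAm * (M1 * (1 - P₁ * (W'A * Y₁))) := by rw [hK, Matrix.mul_one]
        _ = (WAm * M1) * (1 - P₁ * (W'A * Y₁)) := by rw [Matrix.mul_assoc]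
        _ = 1 - P₁ * (W'A * Y₁) := by rw [hWAM1, Matrix.one_mul]
    -- Schur splitting of M3
    have hsub3 : M3l.submatrix Fin.castSucc Fin.castSucc = M2l := by
      funext i j
      refine Subtype.ext ?_
      show M3 i.castSucc j.castSucc = M2 i j
      rw [hM3def, hM2def, Matrix.add_apply, Matrix.add_apply]
      congr 1
      rw [Matrix.one_apply, Matrix.one_apply]
      simp [Fin.castSucc_inj]
    have hdetM3 : M3l.det = M2l.det *
        (M3l (Fin.last n) (Fin.last n) -
          ∑ k, ∑ j, M3l (Fin.last n) (Fin.castSucc k) * W' k j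
            * M3l (Fin.castSucc j) (Fin.last n)) := by
      have h7 := det_split_last M3l W' (by rw [hsub3]; exact mul_invOf_self _)
        (by rw [hsub3]; exact invOf_mul_self _)
      rw [hsub3] at h7
      exact h7
    -- identify the Schur scalar with 1 + (yr * uum) 0 0
    have hrow3 : ∀ k : Fin n, (M3l (Fin.last n) (Fin.castSucc k) : A) = (yr * P₁) 0 k := by
      intro k
      show M3 (Fin.last n) (Fin.castSucc k) = (yr * P₁) 0 k
      rw [hM3def, Matrix.add_apply,
        Matrix.one_apply_ne (Fin.ne_of_gt (Fin.castSucc_lt_last k)), zero_add,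
        Matrix.mul_apply, Matrix.mul_apply]
      rfl
    have hcol3 : ∀ j : Fin n, (M3l (Fin.castSucc j) (Fin.last n) : A) = (Y₁ * pc) j 0 := by
      intro j
      show M3 (Fin.castSucc j) (Fin.last n) = (Y₁ * pc) j 0
      rw [hM3def, Matrix.add_apply,
        Matrix.one_apply_ne (Fin.ne_of_lt (Fin.castSucc_lt_last j)), zero_add,
        Matrix.mul_apply, Matrix.mul_apply]
      rfl
    have hlast3 : (M3l (Fin.last n) (Fin.last n) : A) = 1 + (yr * pc) 0 0 := by
      show M3 (Fin.last n) (Fin.last n) = 1 + (yr * pc) 0 0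
      rw [hM3def, Matrix.add_apply, Matrix.one_apply_eq, Matrix.mul_apply]
      rfl
    -- the scalar alpha
    set αl : C.S := (⟨(yr * uum) 0 0, by
      rw [Matrix.mul_apply]
      exact sum_mem fun k _ => hprod _ _ (hyr_od k) (huum_od k)⟩ : C.S) with hαl
    have claimδ : (M3l (Fin.last n) (Fin.last n) -
          ∑ k, ∑ j, M3l (Fin.last n) (Fin.castSucc k) * W' k j
            * M3l (Fin.castSucc j) (Fin.last n)) = 1 + αl := by
      refine Subtype.coe_injective ?_
      push_cast
      have e1 : (∑ k, ∑ j, (M3l (Fin.last n) (Fin.castSucc k) : A) * (W' k j : A)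
          * (M3l (Fin.castSucc j) (Fin.last n) : A))
          = ((yr * P₁) * W'A * (Y₁ * pc)) 0 0 := by
        rw [triple_apply]
        refine Finset.sum_congr rfl fun k _ => Finset.sum_congr rfl fun j _ => ?_
        rw [hrow3 k, hcol3 j]
        rfl
      calc (M3l (Fin.last n) (Fin.last n) : A) -
            ∑ k, ∑ j, (M3l (Fin.last n) (Fin.castSucc k) : A) * (W' k j : A)
              * (M3l (Fin.castSucc j) (Fin.last n) : A)
          = 1 + (yr * pc) 0 0 - ((yr * P₁) * W'A * (Y₁ * pc)) 0 0 := by rw [e1, hlast3]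
        _ = 1 + (yr * uum) 0 0 := by
            rw [huumdef, hPT]
            have e2 : yr * ((1 - P₁ * (W'A * Y₁)) * pc)
                = yr * pc - yr * P₁ * W'A * (Y₁ * pc) := by
              rw [Matrix.sub_mul, Matrix.one_mul, Matrix.mul_sub]
              congr 1
              rw [Matrix.mul_assoc yr, Matrix.mul_assoc P₁, Matrix.mul_assoc W'A,
                Matrix.mul_assoc yr, Matrix.mul_assoc P₁]
            rw [e2, Matrix.sub_apply]
            abel
        _ = 1 + (αl : A) := rfl
    -- assemble everything
    have hnc1 : ncdet ((1 : Matrix (Fin r) (Fin r) A) + P * Y)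
        = ncdet M1 * ncdet (1 + uum * yr) := by
      rw [fact1]
      exact ncdet_mul_of_mem C hM1m hUm
    set El := (C.lift _ hUm).det with hEl
    have hroR : El * (1 + αl) = 1 := by
      refine Subtype.coe_injective ?_
      push_cast
      rw [← ncdet_lift C _ hUm]
      exact hro
    have hnc1' : ncdet ((1 : Matrix (Fin r) (Fin r) A) + P * Y) = ((M1l.det * El : C.S) : A) := by
      rw [hnc1, ncdet_lift C M1 hM1m, ncdet_lift C _ hUm]
      push_cast
      rfl
    have hnc2 : ncdet ((1 : Matrix (Fin (n+1)) (Fin (n+1)) A) + Y * P)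
        = ((M2l.det * (1 + αl) : C.S) : A) := by
      rw [← hM3def, ncdet_lift C M3 hM3m, hdetM3, claimδ]
    rw [hnc1', hnc2]
    have final : (M1l.det * El) * (M2l.det * (1 + αl)) = 1 := by
      calc (M1l.det * El) * (M2l.det * (1 + αl))
          = (M1l.det * M2l.det) * (El * (1 + αl)) := by ring
        _ = 1 := by rw [hD, hroR, one_mul]
    calc ((M1l.det * El : C.S) : A) * ((M2l.det * (1 + αl) : C.S) : A)
        = (((M1l.det * El) * (M2l.det * (1 + αl)) : C.S) : A) := by push_cast; rfl
      _ = 1 := by rw [final]; rfl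

end Core2

theorem final_comb {A : Type} [Ring A] (C : CSub A) (x1 x2 x3 x4 x5 x6 : A)
    (h1 : x1 ∈ C.S) (h2 : x2 ∈ C.S) (h3 : x3 ∈ C.S) (h4 : x4 ∈ C.S) (h5 : x5 ∈ C.S)
    (h6 : x6 ∈ C.S) (r16 : x1 * x6 = 1) (r43 : x4 * x3 = 1) (r25 : x2 * x5 = 1) :
    ((x1 * x2) * x3) * ((x4 * x5) * x6) = 1 ∧ ((x4 * x5) * x6) * ((x1 * x2) * x3) = 1 := by
  set e1 : C.S := ⟨x1, h1⟩
  set e2 : C.S := ⟨x2, h2⟩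
  set e3 : C.S := ⟨x3, h3⟩
  set e4 : C.S := ⟨x4, h4⟩
  set e5 : C.S := ⟨x5, h5⟩
  set e6 : C.S := ⟨x6, h6⟩
  have r16' : e1 * e6 = 1 := Subtype.coe_injective (by push_cast; exact r16)
  have r43' : e4 * e3 = 1 := Subtype.coe_injective (by push_cast; exact r43)
  have r25' : e2 * e5 = 1 := Subtype.coe_injective (by push_cast; exact r25)
  have big1 : ((e1 * e2) * e3) * ((e4 * e5) * e6) = 1 := by
    calc ((e1 * e2) * e3) * ((e4 * e5) * e6) = ((e1 * e6) * (e4 * e3)) * (e2 * e5) := by ring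
      _ = 1 := by rw [r16', r43', r25', one_mul, one_mul]
  have big2 : ((e4 * e5) * e6) * ((e1 * e2) * e3) = 1 := by
    calc ((e4 * e5) * e6) * ((e1 * e2) * e3) = ((e1 * e6) * (e4 * e3)) * (e2 * e5) := by ring
      _ = 1 := by rw [r16', r43', r25', one_mul, one_mul]
  constructor
  · have := congrArg (Subtype.val) big1
    push_cast at this
    exact this
  · have := congrArg (Subtype.val) big2
    push_cast at this
    exact this


theorem berStar_eq_inv_ber
    {A : Type} [Ring A]
    (IsEven IsOdd : A → Prop)
    (heven_central : ∀ x y : A, IsEven x → x * y = y * x)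
    (hodd_anticomm : ∀ x y : A, IsOdd x → IsOdd y → x * y = -(y * x))
    (hodd_sq : ∀ x : A, IsOdd x → x * x = 0)
    {r s : ℕ}
    (g00 : Matrix (Fin r) (Fin r) A) (g01 : Matrix (Fin r) (Fin s) A)
    (g10 : Matrix (Fin s) (Fin r) A) (g11 : Matrix (Fin s) (Fin s) A)
    (h00e : ∀ i j, IsEven (g00 i j)) (h11e : ∀ i j, IsEven (g11 i j))
    (h01o : ∀ i j, IsOdd (g01 i j)) (h10o : ∀ i j, IsOdd (g10 i j))
    (g00i : Matrix (Fin r) (Fin r) A)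
    (hg00i : g00 * g00i = 1 ∧ g00i * g00 = 1)
    (g11i : Matrix (Fin s) (Fin s) A)
    (hg11i : g11 * g11i = 1 ∧ g11i * g11 = 1)
    (d00i d11i : A)
    (hd00 : ncdet g00 * d00i = 1 ∧ d00i * ncdet g00 = 1)
    (hd11 : ncdet g11 * d11i = 1 ∧ d11i * ncdet g11 = 1) :
    (ncdet (g00 - g01 * g11i * g10) * d11i)
        * (ncdet (g11 - g10 * g00i * g01) * d00i) = 1 ∧
    (ncdet (g11 - g10 * g00i * g01) * d00i)
        * (ncdet (g00 - g01 * g11i * g10) * d11i) = 1 := by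
    -- the center as a commutative subring
  set Zc : CSub A := ⟨Subring.center A, fun x hx y _ => (Subring.mem_center_iff.1 hx y).symm⟩
    with hZcdef
  have hZS : (Zc.S : Set A) = (Subring.center A : Set A) := rfl
  have hg00c : ∀ i j, g00 i j ∈ Zc.S :=
    fun i j => Subring.mem_center_iff.2 fun g => (heven_central _ g (h00e i j)).symm
  have hg11c : ∀ i j, g11 i j ∈ Zc.S :=
    fun i j => Subring.mem_center_iff.2 fun g => (heven_central _ g (h11e i j)).symm
  have hdet00c : ncdet g00 ∈ Zc.S := ncdet_mem Zc g00 hg00c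
  have hdet11c : ncdet g11 ∈ Zc.S := ncdet_mem Zc g11 hg11c
  -- inverses of central elements are central
  have hinv_center : ∀ x y : A, x ∈ Zc.S → x * y = 1 → y * x = 1 → y ∈ Zc.S := by
    intro x y hx hxy hyx
    refine Subring.mem_center_iff.2 fun g => ?_
    calc g * y = (y * x) * (g * y) := by rw [hyx, one_mul]
      _ = y * (x * g * y) := by noncomm_ring
      _ = y * (g * x * y) := by rw [Subring.mem_center_iff.1 hx g]
      _ = y * (g * (x * y)) := by noncomm_ring
      _ = y * g := by rw [hxy, mul_one]
  have hd00c : d00i ∈ Zc.S := hinv_center _ _ hdet00c hd00.1 hd00.2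
  have hd11c : d11i ∈ Zc.S := hinv_center _ _ hdet11c hd11.1 hd11.2
  -- entries of g00i are central
  have hg00ic : ∀ i j, g00i i j ∈ Zc.S := by
    set G := Zc.lift g00 hg00c with hG
    have hDu : G.det * (⟨d00i, hd00c⟩ : Zc.S) = 1 := by
      refine Subtype.coe_injective ?_
      push_cast
      rw [← ncdet_lift Zc g00 hg00c]
      exact hd00.1
    haveI : Invertible G := Matrix.invertibleOfIsUnitDet _ (IsUnit.of_mul_eq_one _ hDu)
    have hKe : g00 * Zc.emb (⅟G) = 1 := by
      calc g00 * Zc.emb (⅟G) = Zc.emb G * Zc.emb (⅟G) := by rw [Zc.emb_lift]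
        _ = Zc.emb (G * ⅟G) := (Zc.emb_mul _ _).symm
        _ = 1 := by rw [mul_invOf_self, Zc.emb_one]
    have heq : g00i = Zc.emb (⅟G) := by
      calc g00i = g00i * (g00 * Zc.emb (⅟G)) := by rw [hKe, Matrix.mul_one]
        _ = (g00i * g00) * Zc.emb (⅟G) := by rw [Matrix.mul_assoc]
        _ = Zc.emb (⅟G) := by rw [hg00i.2, Matrix.one_mul]
    intro i j
    rw [heq]
    exact ((⅟G) i j).2
  have hg11ic : ∀ i j, g11i i j ∈ Zc.S := by
    set G := Zc.lift g11 hg11c with hG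
    have hDu : G.det * (⟨d11i, hd11c⟩ : Zc.S) = 1 := by
      refine Subtype.coe_injective ?_
      push_cast
      rw [← ncdet_lift Zc g11 hg11c]
      exact hd11.1
    haveI : Invertible G := Matrix.invertibleOfIsUnitDet _ (IsUnit.of_mul_eq_one _ hDu)
    have hKe : g11 * Zc.emb (⅟G) = 1 := by
      calc g11 * Zc.emb (⅟G) = Zc.emb G * Zc.emb (⅟G) := by rw [Zc.emb_lift]
        _ = Zc.emb (G * ⅟G) := (Zc.emb_mul _ _).symm
        _ = 1 := by rw [mul_invOf_self, Zc.emb_one]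
    have heq : g11i = Zc.emb (⅟G) := by
      calc g11i = g11i * (g11 * Zc.emb (⅟G)) := by rw [hKe, Matrix.mul_one]
        _ = (g11i * g11) * Zc.emb (⅟G) := by rw [Matrix.mul_assoc]
        _ = Zc.emb (⅟G) := by rw [hg11i.2, Matrix.one_mul]
    intro i j
    rw [heq]
    exact ((⅟G) i j).2
  -- generators
  set gens : Set A := {x | (∃ i j, g01 i j = x) ∨ (∃ i j, g10 i j = x)} with hgensdef
  have hgens_odd : ∀ x ∈ gens, IsOdd x := by
    rintro x (⟨i, j, rfl⟩ | ⟨i, j, rfl⟩)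
    · exact h01o i j
    · exact h10o i j
  set P2 : Set A := {x | ∃ a ∈ gens, ∃ b ∈ gens, a * b = x} with hP2def
  set SRset : Set A := (Subring.center A : Set A) ∪ P2 with hSRsetdef
  set SR : Subring A := Subring.closure SRset with hSRdef
  -- generators of SR commute with odd generators
  have hcomm_gen_set : ∀ x ∈ SRset, ∀ g ∈ gens, g * x = x * g := by
    rintro x (hx | ⟨a, ha, b, hb, rfl⟩) g hg
    · exact Subring.mem_center_iff.1 hx g
    · have h1 : g * a = -(a * g) := hodd_anticomm _ _ (hgens_odd g hg) (hgens_odd a ha)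
      have h2 : g * b = -(b * g) := hodd_anticomm _ _ (hgens_odd g hg) (hgens_odd b hb)
      calc g * (a * b) = (g * a) * b := by rw [mul_assoc]
        _ = -(a * (g * b)) := by rw [h1]; noncomm_ring
        _ = -(a * (-(b * g))) := by rw [h2]
        _ = (a * b) * g := by noncomm_ring
  have hSR_comm_gens : ∀ x ∈ SR, ∀ g ∈ gens, x * g = g * x := by
    have hle : SR ≤ Subring.centralizer gens :=
      Subring.closure_le.2 fun x hx => Subring.mem_centralizer_iff.2 fun g hg =>
        hcomm_gen_set x hx g hg
    intro x hx g hg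
    exact (Subring.mem_centralizer_iff.1 (hle hx) g hg).symm
  -- SR is commutative
  have hpair : ∀ x ∈ SRset, ∀ y ∈ SRset, x * y = y * x := by
    intro x hx y hy
    rcases hx with hx | ⟨a, ha, b, hb, rfl⟩
    · exact (Subring.mem_center_iff.1 hx y).symm
    · rcases hy with hy | hy2
      · exact Subring.mem_center_iff.1 hy (a * b)
      · have hyS : y ∈ SRset := Or.inr hy2
        have hay : a * y = y * a := hcomm_gen_set y hyS a ha
        have hby : b * y = y * b := hcomm_gen_set y hyS b hb
        calc (a * b) * y = a * (b * y) := by rw [mul_assoc]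
          _ = a * (y * b) := by rw [hby]
          _ = (a * y) * b := by rw [mul_assoc]
          _ = (y * a) * b := by rw [hay]
          _ = y * (a * b) := by rw [mul_assoc]
  have hSRcomm : ∀ x ∈ SR, ∀ y ∈ SR, x * y = y * x := by
    have step1 : SR ≤ Subring.centralizer SRset :=
      Subring.closure_le.2 fun x hx => Subring.mem_centralizer_iff.2 fun g hg =>
        hpair g hg x hx
    have step2 : SR ≤ Subring.centralizer (SR : Set A) :=
      Subring.closure_le.2 fun x hx => Subring.mem_centralizer_iff.2 fun z hz =>
        (Subring.mem_centralizer_iff.1 (step1 hz) x hx).symm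
    intro x hx y hy
    exact Subring.mem_centralizer_iff.1 (step2 hy) x hx
  set C : CSub A := ⟨SR, hSRcomm⟩ with hCdef
  have hZsub : ∀ {x : A}, x ∈ Subring.center A → x ∈ SR :=
    fun hx => Subring.subset_closure (Or.inl hx)
  have hP2sub : ∀ a ∈ gens, ∀ b ∈ gens, a * b ∈ SR :=
    fun a ha b hb => Subring.subset_closure (Or.inr ⟨a, ha, b, hb, rfl⟩)
  -- the odd set
  set Og : Set A := {x | ∃ s ∈ SR, ∃ a ∈ gens, s * a = x} with hOgdef
  set od : A → Prop := fun x => x ∈ AddSubgroup.closure Og with hoddef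
  have hzero : od 0 := zero_mem _
  have hadd : ∀ a b, od a → od b → od (a + b) := fun a b ha hb => add_mem ha hb
  have hsmul : ∀ t a, t ∈ SR → od a → od (t * a) := by
    intro t a ht ha
    refine AddSubgroup.closure_induction (p := fun x _ => od (t * x)) ?_ ?_ ?_ ?_ ha
    · rintro x ⟨s', hs', a', ha', rfl⟩
      refine AddSubgroup.subset_closure ⟨t * s', mul_mem ht hs', a', ha', ?_⟩
      rw [mul_assoc]
    · show od (t * 0)
      rw [mul_zero]; exact zero_mem _
    · intro x y _ _ ihx ihy
      show od (t * (x + y))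
      rw [mul_add]; exact add_mem ihx ihy
    · intro x _ ihx
      show od (t * -x)
      rw [mul_neg]; exact neg_mem ihx
  have hso : ∀ t a, t ∈ SR → od a → t * a = a * t := by
    intro t a ht ha
    refine AddSubgroup.closure_induction (p := fun x _ => t * x = x * t) ?_ ?_ ?_ ?_ ha
    · rintro x ⟨s', hs', a', ha', rfl⟩
      have h1 : t * s' = s' * t := hSRcomm t ht s' hs'
      have h2 : t * a' = a' * t := by
        have := hSR_comm_gens t ht a' ha'
        exact this
      calc t * (s' * a') = (t * s') * a' := by rw [mul_assoc]
        _ = (s' * t) * a' := by rw [h1]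
        _ = s' * (t * a') := by rw [mul_assoc]
        _ = s' * (a' * t) := by rw [h2]
        _ = (s' * a') * t := by rw [mul_assoc]
    · show t * 0 = 0 * t
      rw [mul_zero, zero_mul]
    · intro x y hx' hy' ihx ihy
      show t * (x + y) = (x + y) * t
      rw [mul_add, add_mul, ihx, ihy]
    · intro x hx' ihx
      show t * -x = -x * t
      rw [mul_neg, neg_mul, ihx]
  -- products of generators
  have hgenmul : ∀ (t a t' b : A), t ∈ SR → t' ∈ SR → a ∈ gens → b ∈ gens →
      (t * a) * (t' * b) = (t * t') * (a * b) := by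
    intro t a t' b ht ht' ha hb
    have h1 : a * t' = t' * a := (hSR_comm_gens t' ht' a ha).symm
    have h2 : (t * a) * (t' * b) = t * ((a * t') * b) := by noncomm_ring
    rw [h2, h1]
    noncomm_ring
  have hgenanti : ∀ x ∈ Og, ∀ y ∈ Og, x * y = -(y * x) := by
    rintro x ⟨t, ht, a, ha, rfl⟩ y ⟨t', ht', b, hb, rfl⟩
    rw [hgenmul t a t' b ht ht' ha hb, hgenmul t' b t a ht' ht hb ha]
    rw [hodd_anticomm a b (hgens_odd a ha) (hgens_odd b hb)]
    rw [hSRcomm t' ht' t ht]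
    rw [mul_neg]
  have hanti : ∀ a b, od a → od b → a * b = -(b * a) := by
    have anti2 : ∀ x ∈ Og, ∀ b, od b → x * b = -(b * x) := by
      intro x hx b hb
      refine AddSubgroup.closure_induction (p := fun y _ => x * y = -(y * x)) ?_ ?_ ?_ ?_ hb
      · intro y hy
        exact hgenanti x hx y hy
      · show x * 0 = -(0 * x)
        rw [mul_zero, zero_mul, neg_zero]
      · intro y z hy' hz' ihy ihz
        show x * (y + z) = -((y + z) * x)
        rw [mul_add, add_mul, ihy, ihz, neg_add]
      · intro y hy' ihy
        show x * -y = -(-y * x)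
        rw [mul_neg, neg_mul, ihy]
    intro a b ha hb
    refine AddSubgroup.closure_induction (p := fun x _ => x * b = -(b * x)) ?_ ?_ ?_ ?_ ha
    · intro x hx
      exact anti2 x hx b hb
    · show 0 * b = -(b * 0)
      rw [zero_mul, mul_zero, neg_zero]
    · intro x y hx' hy' ihx ihy
      show (x + y) * b = -(b * (x + y))
      rw [add_mul, mul_add, ihx, ihy, neg_add]
    · intro x hx' ihx
      show -x * b = -(b * -x)
      rw [neg_mul, mul_neg, ihx]
  have hsq : ∀ a, od a → a * a = 0 := by
    intro a ha
    refine AddSubgroup.closure_induction (p := fun x _ => x * x = 0) ?_ ?_ ?_ ?_ ha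
    · rintro x ⟨t, ht, a', ha', rfl⟩
      rw [hgenmul t a' t a' ht ht ha' ha']
      rw [hodd_sq a' (hgens_odd a' ha'), mul_zero]
    · show (0 : A) * 0 = 0
      rw [mul_zero]
    · intro x y hx hy ihx ihy
      have hxy : x * y = -(y * x) := hanti x y hx hy
      show (x + y) * (x + y) = 0
      rw [add_mul, mul_add, mul_add, ihx, ihy, hxy]
      abel
    · intro x hx' ihx
      show -x * -x = 0
      rw [neg_mul_neg, ihx]
  have hprod : ∀ a b, od a → od b → a * b ∈ SR := by
    have prod1 : ∀ x ∈ Og, ∀ b, od b → x * b ∈ SR := by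
      intro x hx b hb
      refine AddSubgroup.closure_induction (p := fun y _ => x * y ∈ SR) ?_ ?_ ?_ ?_ hb
      · rintro y ⟨t', ht', b', hb', rfl⟩
        obtain ⟨t, ht, a', ha', rfl⟩ := hx
        rw [hgenmul t a' t' b' ht ht' ha' hb']
        exact mul_mem (mul_mem ht ht') (hP2sub a' ha' b' hb')
      · show x * 0 ∈ SR
        rw [mul_zero]; exact zero_mem _
      · intro y z hy' hz' ihy ihz
        show x * (y + z) ∈ SR
        rw [mul_add]; exact add_mem ihy ihz
      · intro y hy' ihy
        show x * -y ∈ SR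
        rw [mul_neg]; exact neg_mem ihy
    intro a b ha hb
    refine AddSubgroup.closure_induction (p := fun x _ => x * b ∈ SR) ?_ ?_ ?_ ?_ ha
    · intro x hx
      exact prod1 x hx b hb
    · show (0 : A) * b ∈ SR
      rw [zero_mul]; exact zero_mem _
    · intro x y hx' hy' ihx ihy
      show (x + y) * b ∈ SR
      rw [add_mul]; exact add_mem ihx ihy
    · intro x hx' ihx
      show -x * b ∈ SR
      rw [neg_mul]; exact neg_mem ihx
  -- odd matrices
  have hod01 : ∀ i j, od (g01 i j) := fun i j =>
    AddSubgroup.subset_closure ⟨1, one_mem _, g01 i j, Or.inl ⟨i, j, rfl⟩, one_mul _⟩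
  have hod10 : ∀ i j, od (g10 i j) := fun i j =>
    AddSubgroup.subset_closure ⟨1, one_mem _, g10 i j, Or.inr ⟨i, j, rfl⟩, one_mul _⟩
  set Pm : Matrix (Fin r) (Fin s) A := g00i * g01 with hPmdef
  set Yv : Matrix (Fin s) (Fin r) A := -(g11i * g10) with hYvdef
  have hodPm : ∀ i j, od (Pm i j) := by
    intro i j
    rw [hPmdef]
    show (∑ k, g00i i k * g01 k j) ∈ AddSubgroup.closure Og
    exact sum_mem fun k _ => hsmul _ _ (hZsub (hg00ic i k)) (hod01 k j)
  have hodYv : ∀ i j, od (Yv i j) := by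
    intro i j
    rw [hYvdef]
    show -(∑ k, g11i i k * g10 k j) ∈ AddSubgroup.closure Og
    exact neg_mem (sum_mem fun k _ => hsmul _ _ (hZsub (hg11ic i k)) (hod10 k j))
  -- factorizations
  have key1 : g00 * ((1 : Matrix (Fin r) (Fin r) A) + Pm * Yv) = g00 - g01 * g11i * g10 := by
    have e : g00 * ((g00i * g01) * (g11i * g10)) = g01 * g11i * g10 := by
      rw [← Matrix.mul_assoc g00 (g00i * g01) _, ← Matrix.mul_assoc g00 g00i g01,
        hg00i.1, Matrix.one_mul, Matrix.mul_assoc g01 g11i g10]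
    calc g00 * (1 + Pm * Yv) = g00 + g00 * (Pm * Yv) := by
          rw [Matrix.mul_add, Matrix.mul_one]
      _ = g00 + -(g00 * ((g00i * g01) * (g11i * g10))) := by
          rw [hPmdef, hYvdef, Matrix.mul_neg, Matrix.mul_neg]
      _ = g00 - g01 * g11i * g10 := by rw [e, sub_eq_add_neg]
  have key2 : g11 * ((1 : Matrix (Fin s) (Fin s) A) + Yv * Pm) = g11 - g10 * g00i * g01 := by
    have e : g11 * ((g11i * g10) * (g00i * g01)) = g10 * g00i * g01 := by
      rw [← Matrix.mul_assoc g11 (g11i * g10) _, ← Matrix.mul_assoc g11 g11i g10,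
        hg11i.1, Matrix.one_mul, ← Matrix.mul_assoc g10 g00i g01]
    calc g11 * (1 + Yv * Pm) = g11 + g11 * (Yv * Pm) := by
          rw [Matrix.mul_add, Matrix.mul_one]
      _ = g11 + -(g11 * ((g11i * g10) * (g00i * g01))) := by
          rw [hPmdef, hYvdef, Matrix.neg_mul, Matrix.mul_neg]
      _ = g11 - g10 * g00i * g01 := by rw [e, sub_eq_add_neg]
  -- memberships of the factors
  have hg00m : ∀ i j, g00 i j ∈ C.S := fun i j => hZsub (hg00c i j)
  have hg11m : ∀ i j, g11 i j ∈ C.S := fun i j => hZsub (hg11c i j)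
  have honem : ∀ {m : ℕ} (i j : Fin m), (1 : Matrix (Fin m) (Fin m) A) i j ∈ C.S := by
    intro m i j
    rw [Matrix.one_apply]
    split <;> [exact one_mem _; exact zero_mem _]
  have hS1 : ∀ i j, ((1 : Matrix (Fin r) (Fin r) A) + Pm * Yv) i j ∈ C.S := by
    intro i j
    refine add_mem (honem i j) ?_
    rw [Matrix.mul_apply]
    exact sum_mem fun k _ => hprod _ _ (hodPm i k) (hodYv k j)
  have hS2 : ∀ i j, ((1 : Matrix (Fin s) (Fin s) A) + Yv * Pm) i j ∈ C.S := by
    intro i j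
    refine add_mem (honem i j) ?_
    rw [Matrix.mul_apply]
    exact sum_mem fun k _ => hprod _ _ (hodYv i k) (hodPm k j)
  -- determinant factorizations
  have ncdS : ncdet (g00 - g01 * g11i * g10)
      = ncdet g00 * ncdet ((1 : Matrix (Fin r) (Fin r) A) + Pm * Yv) := by
    rw [← key1]
    exact ncdet_mul_of_mem C hg00m hS1
  have ncdT : ncdet (g11 - g10 * g00i * g01)
      = ncdet g11 * ncdet ((1 : Matrix (Fin s) (Fin s) A) + Yv * Pm) := by
    rw [← key2]
    exact ncdet_mul_of_mem C hg11m hS2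
  have sylv : ncdet ((1 : Matrix (Fin r) (Fin r) A) + Pm * Yv)
      * ncdet ((1 : Matrix (Fin s) (Fin s) A) + Yv * Pm) = 1 :=
    odd_sylvester C od hanti hsq hprod hso hsmul hadd hzero r Pm Yv hodPm hodYv
  -- final assembly in the commutative subring
  have hfin := final_comb C (ncdet g00) (ncdet ((1 : Matrix (Fin r) (Fin r) A) + Pm * Yv)) d11i
    (ncdet g11) (ncdet ((1 : Matrix (Fin s) (Fin s) A) + Yv * Pm)) d00i
    (ncdet_mem C g00 hg00m) (ncdet_mem C _ hS1) (hZsub hd11c)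
    (ncdet_mem C g11 hg11m) (ncdet_mem C _ hS2) (hZsub hd00c)
    hd00.1 hd11.1 sylv
  constructor
  · rw [ncdS, ncdT]
    have h1 := hfin.1
    calc ncdet g00 * ncdet (1 + Pm * Yv) * d11i
          * (ncdet g11 * ncdet (1 + Yv * Pm) * d00i)
        = ((ncdet g00 * ncdet (1 + Pm * Yv)) * d11i)
          * ((ncdet g11 * ncdet (1 + Yv * Pm)) * d00i) := by noncomm_ring
      _ = 1 := h1
  · rw [ncdS, ncdT]
    have h2 := hfin.2
    calc ncdet g11 * ncdet (1 + Yv * Pm) * d00i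
          * (ncdet g00 * ncdet (1 + Pm * Yv) * d11i)
        = ((ncdet g11 * ncdet (1 + Yv * Pm)) * d00i)
          * ((ncdet g00 * ncdet (1 + Pm * Yv)) * d11i) := by noncomm_ring
      _ = 1 := h2
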